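/- Let p, r be positive integers with r ≤ p. Let M ∈ ℝ^{p×r} admit a thin singular value decomposition M = U Σ Wᵀ, where U ∈ St(p,r), W is an r×r orthogonal matrix, and Σ is an r×r diagonal matrix with strictly positive diagonal entries. Then U Wᵀ is the unique minimizer over Y ∈ St(p,r) of the Frobenius distance ‖M − Y‖_F; that is, ‖M − UWᵀ‖_F ≤ ‖M − Y‖_F for all Y ∈ St(p,r), with equality only if Y = UWᵀ. -/
import Mathlib
open Matrix
attribute [local instance] Matrix.frobeniusNormedAddCommGroup Matrix.frobeniusNormedSpace

lemma mySqNorm {p r : ℕ} (A : Matrix (Fin p) (Fin r) ℝ) : ‖A‖^2 = trace (Aᵀ * A) := by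
  rw [Matrix.frobenius_norm_def, ← Real.rpow_natCast _ 2, ← Real.rpow_mul (by positivity)]
  norm_num
  rw [Finset.sum_comm]
  simp [Matrix.trace, Matrix.mul_apply, Matrix.diag, sq]

lemma myKey {p r : ℕ} (U Y : Matrix (Fin p) (Fin r) ℝ) (W : Matrix (Fin r) (Fin r) ℝ)
    (σ : Fin r → ℝ)
    (hU : Uᵀ * U = 1) (hW : Wᵀ * W = 1) (hW' : W * Wᵀ = 1) (hY : Yᵀ * Y = 1) :
    ‖U * Matrix.diagonal σ * Wᵀ - Y‖^2
      = ‖U * Matrix.diagonal σ * Wᵀ - U * Wᵀ‖^2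
        + trace (Matrix.diagonal σ * ((U - Y * W)ᵀ * (U - Y * W))) := by
  set S := Matrix.diagonal σ with hS
  set M := U * S * Wᵀ with hMdef
  have hSt : Sᵀ = S := Matrix.diagonal_transpose σ
  have hMt : Mᵀ = W * S * Uᵀ := by
    rw [hMdef, Matrix.transpose_mul, Matrix.transpose_mul, hSt, Matrix.transpose_transpose,
      Matrix.mul_assoc]
  have h1 : trace (Mᵀ * Y) = trace (S * (Uᵀ * Y * W)) := by
    rw [hMt]
    rw [show W * S * Uᵀ * Y = W * (S * (Uᵀ * Y)) by simp [Matrix.mul_assoc]]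
    rw [Matrix.trace_mul_comm]
    simp [Matrix.mul_assoc]
  have h2 : trace (Yᵀ * M) = trace (S * (Uᵀ * Y * W)) := by
    rw [← Matrix.trace_transpose (Yᵀ * M), Matrix.transpose_mul, Matrix.transpose_transpose, h1]
  have h3 : trace (Mᵀ * (U * Wᵀ)) = trace S := by
    rw [hMt, show W * S * Uᵀ * (U * Wᵀ) = W * S * (Uᵀ * U) * Wᵀ by simp [Matrix.mul_assoc]]
    rw [hU, Matrix.mul_one, Matrix.mul_assoc, Matrix.trace_mul_comm, Matrix.mul_assoc, hW,
      Matrix.mul_one]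
  have h5 : trace ((U * Wᵀ)ᵀ * M) = trace S := by
    rw [← Matrix.trace_transpose ((U * Wᵀ)ᵀ * M), Matrix.transpose_mul,
      Matrix.transpose_transpose, h3]
  have h4 : trace ((U * Wᵀ)ᵀ * (U * Wᵀ)) = trace (1 : Matrix (Fin r) (Fin r) ℝ) := by
    rw [Matrix.transpose_mul, Matrix.transpose_transpose,
      show W * Uᵀ * (U * Wᵀ) = W * (Uᵀ * U) * Wᵀ by simp [Matrix.mul_assoc], hU,
      Matrix.mul_one, hW']
  have hYY : trace (Yᵀ * Y) = trace (1 : Matrix (Fin r) (Fin r) ℝ) := by rw [hY]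
  have h6 : (U - Y * W)ᵀ * (U - Y * W)
      = 1 + 1 - (Uᵀ * Y * W) - (Uᵀ * Y * W)ᵀ := by
    rw [Matrix.transpose_sub, Matrix.sub_mul, Matrix.mul_sub, Matrix.mul_sub, hU]
    rw [Matrix.transpose_mul, show Wᵀ * Yᵀ * (Y * W) = Wᵀ * (Yᵀ * Y) * W by
      simp [Matrix.mul_assoc], hY, Matrix.mul_one, hW]
    simp only [Matrix.transpose_mul, Matrix.transpose_transpose, Matrix.mul_assoc]
    abel
  have h7 : trace (S * (Uᵀ * Y * W)ᵀ) = trace (S * (Uᵀ * Y * W)) := by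
    rw [← Matrix.trace_transpose (S * (Uᵀ * Y * W)ᵀ), Matrix.transpose_mul,
      Matrix.transpose_transpose, hSt, Matrix.trace_mul_comm]
  have hRHS2 : trace (S * ((U - Y * W)ᵀ * (U - Y * W)))
      = 2 * trace S - 2 * trace (S * (Uᵀ * Y * W)) := by
    rw [h6]
    simp only [Matrix.mul_sub, Matrix.mul_add, Matrix.mul_one, trace_sub, trace_add, h7]
    ring
  rw [mySqNorm, mySqNorm]
  have eL : (M - Y)ᵀ * (M - Y) = Mᵀ * M - Mᵀ * Y - Yᵀ * M + Yᵀ * Y := by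
    rw [Matrix.transpose_sub, Matrix.sub_mul, Matrix.mul_sub, Matrix.mul_sub]
    abel
  have eR : (M - U * Wᵀ)ᵀ * (M - U * Wᵀ)
      = Mᵀ * M - Mᵀ * (U * Wᵀ) - (U * Wᵀ)ᵀ * M + (U * Wᵀ)ᵀ * (U * Wᵀ) := by
    rw [Matrix.transpose_sub, Matrix.sub_mul, Matrix.mul_sub, Matrix.mul_sub]
    abel
  rw [eL, eR]
  simp only [trace_sub, trace_add, h1, h2, h3, h5, h4, hYY, hRHS2]
  ring

lemma myTrace {p r : ℕ} (σ : Fin r → ℝ) (D : Matrix (Fin p) (Fin r) ℝ) :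
    trace (Matrix.diagonal σ * (Dᵀ * D)) = ∑ i, σ i * ∑ k, (D k i)^2 := by
  simp only [Matrix.trace, Matrix.diag, Matrix.mul_apply, sq]
  congr 1; ext i
  rw [Finset.sum_eq_single i (fun b _ hb => by simp [Matrix.diagonal_apply_ne' σ hb])
    (fun h => absurd (Finset.mem_univ i) h)]
  simp [Matrix.diagonal]

/-- If `M = U Σ Wᵀ` is a thin SVD (with `U ∈ St(p,r)`, `W` orthogonal, `Σ = diagonal σ`
with strictly positive entries), then `U Wᵀ` is the unique minimizer over `Y ∈ St(p,r)` of
the Frobenius distance `‖M − Y‖_F`. -/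
theorem thin_svd_orthogonal_factor_is_unique_projection
    (p r : ℕ) (hp : 0 < p) (hr : 0 < r) (hrp : r ≤ p)
    (M U : Matrix (Fin p) (Fin r) ℝ) (W : Matrix (Fin r) (Fin r) ℝ)
    (σ : Fin r → ℝ)
    (hU : Uᵀ * U = 1) (hW : Wᵀ * W = 1) (hW' : W * Wᵀ = 1)
    (hσ : ∀ i, 0 < σ i)
    (hM : M = U * Matrix.diagonal σ * Wᵀ) :
    (∀ Y : Matrix (Fin p) (Fin r) ℝ, Yᵀ * Y = 1 → ‖M - U * Wᵀ‖ ≤ ‖M - Y‖) ∧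
    (∀ Y : Matrix (Fin p) (Fin r) ℝ, Yᵀ * Y = 1 → ‖M - Y‖ = ‖M - U * Wᵀ‖ → Y = U * Wᵀ) := by
  subst hM
  have key : ∀ Y : Matrix (Fin p) (Fin r) ℝ, Yᵀ * Y = 1 →
      ‖U * Matrix.diagonal σ * Wᵀ - Y‖^2
        = ‖U * Matrix.diagonal σ * Wᵀ - U * Wᵀ‖^2
          + ∑ i, σ i * ∑ k, ((U - Y * W) k i)^2 := by
    intro Y hY
    rw [myKey U Y W σ hU hW hW' hY, myTrace]
  have hterm : ∀ (Y : Matrix (Fin p) (Fin r) ℝ) (i : Fin r),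
      0 ≤ σ i * ∑ k, ((U - Y * W) k i)^2 := by
    intro Y i
    have := (hσ i).le
    positivity
  have hnn : ∀ Y : Matrix (Fin p) (Fin r) ℝ,
      0 ≤ ∑ i, σ i * ∑ k, ((U - Y * W) k i)^2 := by
    intro Y
    exact Finset.sum_nonneg fun i _ => hterm Y i
  constructor
  · intro Y hY
    have hk := key Y hY
    nlinarith [hnn Y, norm_nonneg (U * Matrix.diagonal σ * Wᵀ - Y),
      norm_nonneg (U * Matrix.diagonal σ * Wᵀ - U * Wᵀ)]
  · intro Y hY heq
    have hk := key Y hY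
    have hzero : ∑ i, σ i * ∑ k, ((U - Y * W) k i)^2 = 0 := by
      rw [heq] at hk; linarith
    have hD : U - Y * W = 0 := by
      ext k i
      have h1 : σ i * ∑ k, ((U - Y * W) k i)^2 = 0 :=
        (Finset.sum_eq_zero_iff_of_nonneg (fun i _ => hterm Y i)).mp hzero i (Finset.mem_univ i)
      have h2 : ∑ k, ((U - Y * W) k i)^2 = 0 := by
        rcases mul_eq_zero.mp h1 with h | h
        · exact absurd h (hσ i).ne'
        · exact h
      have h3 : ((U - Y * W) k i)^2 = 0 :=
        (Finset.sum_eq_zero_iff_of_nonneg (fun k _ => sq_nonneg _)).mp h2 k (Finset.mem_univ k)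
      have := pow_eq_zero_iff (n := 2) (by norm_num) |>.mp h3
      simpa using this
    have hYW : Y * W = U := by
      have h := sub_eq_zero.mp hD
      exact h.symm
    rw [← hYW, Matrix.mul_assoc, hW', Matrix.mul_one]
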